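/- In a formal power series ring (or with x_i real/complex variables), the generating identity ∏_i (1 + v x_i)/(1 - u x_i) = 1 + (u+v) · Σ_{a,b ≥ 0} s_{(a|b)}(x) u^a v^b holds, where s_{(a|b)} denotes the Schur function indexed by the hook partition with Frobenius coordinates (a|b) = (a+1, 1^b). -/

import Mathlib

open MvPolynomial

/-- The hook Schur polynomial `s_{(a|b)} = s_{(a+1,1^b)}` in `N` variables,
via the dual Jacobi–Trudi expansion `s_{(a+1,1^b)} = Σ_{j=0}^{b} (-1)^j h_{a+1+j} e_{b-j}`. -/
noncomputable def hookSchur (N a b : ℕ) : MvPolynomial (Fin N) ℚ :=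
  ∑ j ∈ Finset.range (b + 1),
    (-1 : MvPolynomial (Fin N) ℚ) ^ j * hsymm (Fin N) ℚ (a + 1 + j) * esymm (Fin N) ℚ (b - j)

/-- The generating series `Σ_{a,b ≥ 0} s_{(a|b)}(x) u^a v^b`, as a formal power
series in `u = X 0`, `v = X 1` with coefficients symmetric polynomials in `x`. -/
noncomputable def hookSchurSeries (N : ℕ) :
    MvPowerSeries (Fin 2) (MvPolynomial (Fin N) ℚ) :=
  fun d => hookSchur N (d 0) (d 1)

open Finset

lemma fin2_ext (d e : Fin 2 →₀ ℕ) (h0 : d 0 = e 0) (h1 : d 1 = e 1) : d = e := by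
  ext i
  fin_cases i
  · exact h0
  · exact h1

theorem hsymm_rec (N k : ℕ) :
    hsymm (Fin (N+1)) ℚ (k+1) =
      rename Fin.succ (hsymm (Fin N) ℚ (k+1)) + X 0 * hsymm (Fin (N+1)) ℚ k := by
  classical
  have hP : ∀ (M : ℕ) (n : ℕ) (a : Fin M) (t : Sym (Fin M) n),
      ((↑(a ::ₛ t) : Multiset (Fin M)).map (X (R := ℚ))).prod = X a * ((t.1.map X).prod) := by
    intro M n a t
    rw [Sym.coe_cons, Multiset.map_cons, Multiset.prod_cons]
    rfl
  have hA : ∑ s ∈ Finset.univ.filter (fun s : Sym (Fin (N+1)) (k+1) => (0 : Fin (N+1)) ∈ s),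
      (Multiset.map X (↑s : Multiset (Fin (N+1)))).prod = X 0 * hsymm (Fin (N+1)) ℚ k := by
    rw [hsymm, Finset.mul_sum]
    refine Finset.sum_bij' (fun s hs => (s.erase 0 (by simpa using hs)))
      (fun t _ => (0 : Fin (N+1)) ::ₛ t) ?_ ?_ ?_ ?_ ?_
    · intro s hs; simp
    · intro t ht; simp
    · intro s hs; exact Sym.cons_erase _
    · intro t ht; exact Sym.erase_cons_head _ _ _
    · intro s hs
      have h2 := hP _ _ (0 : Fin (N+1)) (s.erase 0 (by simpa using hs))
      rw [Sym.cons_erase] at h2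
      exact h2
  have hB : ∑ s ∈ Finset.univ.filter (fun s : Sym (Fin (N+1)) (k+1) => ¬ (0 : Fin (N+1)) ∈ s),
      (Multiset.map X (↑s : Multiset (Fin (N+1)))).prod
      = rename Fin.succ (hsymm (Fin N) ℚ (k+1)) := by
    rw [hsymm, map_sum]
    refine (Finset.sum_bij (fun t _ => Sym.map Fin.succ t) ?_ ?_ ?_ ?_).symm
    · intro t _
      simp only [Finset.mem_filter, Finset.mem_univ, true_and, Sym.mem_map]
      rintro ⟨a, -, ha⟩
      exact (Fin.succ_ne_zero a) ha
    · intro t1 _ t2 _ h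
      exact Sym.map_injective (Fin.succ_injective N) _ h
    · intro s hs
      simp only [Finset.mem_filter, Finset.mem_univ, true_and] at hs
      cases N with
      | zero =>
        exfalso
        obtain ⟨a, ha⟩ := s.exists_mem
        have ha0 : a = 0 := by have := a.isLt; ext; omega
        exact hs (ha0 ▸ ha)
      | succ n =>
        refine ⟨Sym.map (Fin.predAbove 0) s, Finset.mem_univ _, ?_⟩
        ext1
        simp only [Sym.coe_map, Multiset.map_map]
        refine ((Multiset.map_congr rfl fun v hv => ?_).trans (Multiset.map_id' _))
        show Fin.succ (Fin.predAbove 0 v) = v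
        have hv0 : v ≠ 0 := ne_of_mem_of_not_mem hv hs
        rw [← Fin.succAbove_zero]
        exact Fin.succAbove_predAbove hv0
    · intro t _
      rw [map_multiset_prod]
      simp [Sym.coe_map, Multiset.map_map, Function.comp_def]
  have split := Finset.sum_filter_add_sum_filter_not (Finset.univ : Finset (Sym (Fin (N+1)) (k+1)))
    (fun s => (0 : Fin (N+1)) ∈ s)
    (fun s => (Multiset.map (X (R := ℚ)) (↑s : Multiset (Fin (N+1)))).prod)
  rw [hsymm, ← hA, ← hB]
  exact split.symm.trans (add_comm _ _)

noncomputable def Hu (N : ℕ) : MvPowerSeries (Fin 2) (MvPolynomial (Fin N) ℚ) :=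
  fun d => if d 1 = 0 then hsymm (Fin N) ℚ (d 0) else 0

lemma coeff_Hu (N : ℕ) (d : Fin 2 →₀ ℕ) :
    MvPowerSeries.coeff d (Hu N) = if d 1 = 0 then hsymm (Fin N) ℚ (d 0) else 0 := rfl

lemma X_mul_C_eq_monomial (N : ℕ) (a : MvPolynomial (Fin N) ℚ) (k : Fin 2) :
    MvPowerSeries.X k * MvPowerSeries.C (σ := Fin 2) (R := _) a
      = MvPowerSeries.monomial (Finsupp.single k 1) a := by
  rw [MvPowerSeries.X, show MvPowerSeries.C (σ := Fin 2) (R := MvPolynomial (Fin N) ℚ) a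
      = MvPowerSeries.monomial 0 a from rfl, MvPowerSeries.monomial_mul_monomial]
  simp

lemma map_Hu (N : ℕ) :
    MvPowerSeries.map (σ := Fin 2) ((rename (Fin.succ)).toRingHom : MvPolynomial (Fin N) ℚ →+* _) (Hu N)
      = (1 - MvPowerSeries.X 0 * MvPowerSeries.C (σ := Fin 2) (R := _) (X (0 : Fin (N+1)))) * Hu (N+1) := by
  have hco : ∀ p : MvPolynomial (Fin N) ℚ,
      (rename (Fin.succ)).toRingHom p = rename Fin.succ p := fun p => rfl
  have e1 : ∀ d : Fin 2 →₀ ℕ, (d - (Finsupp.single (0:Fin 2) 1 : Fin 2 →₀ ℕ)) 1 = d 1 := by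
    intro d
    rw [Finsupp.tsub_apply, Finsupp.single_eq_of_ne (by decide : (1:Fin 2) ≠ 0)]
    omega
  apply MvPowerSeries.ext
  intro d
  rw [MvPowerSeries.coeff_map, sub_mul, one_mul, map_sub, X_mul_C_eq_monomial,
    MvPowerSeries.coeff_monomial_mul, coeff_Hu, coeff_Hu, hco]
  by_cases h1 : d 1 = 0
  · rw [if_pos h1, if_pos h1]
    by_cases h0 : d 0 = 0
    · have hle : ¬ Finsupp.single (0 : Fin 2) 1 ≤ d := by
        rw [Finsupp.single_le_iff, h0]; omega
      rw [if_neg hle, h0, hsymm_zero, hsymm_zero, sub_zero, map_one]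
    · obtain ⟨k, hk⟩ : ∃ k, d 0 = k + 1 := ⟨d 0 - 1, by omega⟩
      have hle : Finsupp.single (0 : Fin 2) 1 ≤ d := by
        rw [Finsupp.single_le_iff]; omega
      have e0 : (d - (Finsupp.single (0:Fin 2) 1 : Fin 2 →₀ ℕ)) 0 = k := by
        rw [Finsupp.tsub_apply, Finsupp.single_eq_same, hk]
        omega
      rw [if_pos hle, coeff_Hu, e1, e0, if_pos h1, hk, hsymm_rec N k]
      ring
  · rw [if_neg h1, if_neg h1, map_zero]
    by_cases hle : Finsupp.single (0 : Fin 2) 1 ≤ d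
    · rw [if_pos hle, coeff_Hu, e1, if_neg h1, mul_zero, sub_zero]
    · rw [if_neg hle, sub_zero]

lemma hsymm_fin0 (k : ℕ) : hsymm (Fin 0) ℚ (k+1) = 0 := by
  rw [hsymm, Finset.univ_eq_empty, Finset.sum_empty]

lemma Du_mul_Hu (N : ℕ) :
    (∏ i : Fin N,
        (1 - MvPowerSeries.X 0 * MvPowerSeries.C (σ := Fin 2) (R := MvPolynomial (Fin N) ℚ) (X i)))
      * Hu N = 1 := by
  induction N with
  | zero =>
    rw [Finset.univ_eq_empty, Finset.prod_empty, one_mul]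
    apply MvPowerSeries.ext
    intro d
    rw [coeff_Hu, MvPowerSeries.coeff_one]
    by_cases h1 : d 1 = 0
    · by_cases h0 : d 0 = 0
      · rw [if_pos h1, h0, hsymm_zero, if_pos (fin2_ext d 0 (by simpa using h0) (by simpa using h1))]
      · obtain ⟨k, hk⟩ : ∃ k, d 0 = k + 1 := ⟨d 0 - 1, by omega⟩
        rw [if_pos h1, hk, hsymm_fin0, if_neg (fun h => by simp [h] at hk)]
    · rw [if_neg h1, if_neg (fun h => by simp [h] at h1)]
  | succ n ih =>
    have hρ : MvPowerSeries.map (σ := Fin 2) ((rename (Fin.succ)).toRingHom : MvPolynomial (Fin n) ℚ →+* _)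
        (∏ i : Fin n, (1 - MvPowerSeries.X 0 * MvPowerSeries.C (σ := Fin 2) (R := MvPolynomial (Fin n) ℚ) (X i)))
        = ∏ i : Fin n, (1 - MvPowerSeries.X 0
            * MvPowerSeries.C (σ := Fin 2) (R := MvPolynomial (Fin (n+1)) ℚ) (X (Fin.succ i))) := by
      rw [map_prod]
      refine Finset.prod_congr rfl fun i _ => ?_
      rw [map_sub, map_one, map_mul, MvPowerSeries.map_X, MvPowerSeries.map_C]
      congr 2
      simp [rename_X]
    calc (∏ i : Fin (n+1),
          (1 - MvPowerSeries.X 0 * MvPowerSeries.C (σ := Fin 2) (R := MvPolynomial (Fin (n+1)) ℚ) (X i)))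
        * Hu (n+1)
        = (MvPowerSeries.map (σ := Fin 2) ((rename (Fin.succ)).toRingHom : MvPolynomial (Fin n) ℚ →+* _)
            (∏ i : Fin n, (1 - MvPowerSeries.X 0
              * MvPowerSeries.C (σ := Fin 2) (R := MvPolynomial (Fin n) ℚ) (X i))))
          * ((1 - MvPowerSeries.X 0
              * MvPowerSeries.C (σ := Fin 2) (R := MvPolynomial (Fin (n+1)) ℚ) (X (0 : Fin (n+1))))
            * Hu (n+1)) := by
          rw [hρ, Fin.prod_univ_succ]; ring
      _ = 1 := by
          rw [← map_Hu, ← map_mul, ih, map_one]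

lemma gen_vieta {B : Type*} [CommRing B] {σ : Type*} [DecidableEq σ]
    (s : Finset σ) (f : σ → B) (y : B) :
    ∏ i ∈ s, (1 + f i * y)
      = ∑ j ∈ Finset.range (s.card + 1),
          (∑ t ∈ s.powersetCard j, ∏ i ∈ t, f i) * y ^ j := by
  induction s using Finset.induction_on with
  | empty => simp
  | @insert a s ha ih =>
    have htop : ∑ t ∈ s.powersetCard (s.card + 1), ∏ i ∈ t, f i = 0 := by
      rw [Finset.powersetCard_eq_empty.2 (by omega), Finset.sum_empty]
    have hrec : ∀ j : ℕ, (∑ t ∈ (insert a s).powersetCard (j+1), ∏ i ∈ t, f i)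
        = (∑ t ∈ s.powersetCard (j+1), ∏ i ∈ t, f i)
          + f a * ∑ t ∈ s.powersetCard j, ∏ i ∈ t, f i := by
      intro j
      rw [Finset.powersetCard_succ_insert ha, Finset.sum_union, Finset.sum_image, Finset.mul_sum]
      · congr 1
        refine Finset.sum_congr rfl fun t ht => ?_
        rw [Finset.prod_insert (fun hat => ha ((Finset.mem_powersetCard.1 ht).1 hat))]
      · intro t1 h1 t2 h2 h
        have e1 : a ∉ t1 := fun hat => ha ((Finset.mem_powersetCard.1 h1).1 hat)
        have e2 : a ∉ t2 := fun hat => ha ((Finset.mem_powersetCard.1 h2).1 hat)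
        rw [← Finset.erase_insert e1, ← Finset.erase_insert e2, h]
      · rw [Finset.disjoint_right]
        rintro t ht hts
        obtain ⟨t', ht', rfl⟩ := Finset.mem_image.1 ht
        exact ha ((Finset.mem_powersetCard.1 hts).1 (Finset.mem_insert_self a t'))
    rw [Finset.prod_insert ha, ih, Finset.card_insert_of_notMem ha,
      Finset.sum_range_succ' (fun j => (∑ t ∈ (insert a s).powersetCard j, ∏ i ∈ t, f i) * y ^ j)
        (s.card + 1)]
    simp only [hrec, Finset.powersetCard_zero, Finset.sum_singleton, Finset.prod_empty, pow_zero,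
      one_mul, add_mul]
    rw [Finset.sum_add_distrib]
    have h1 : ∑ j ∈ Finset.range (s.card + 1),
        (∑ t ∈ s.powersetCard (j+1), ∏ i ∈ t, f i) * y ^ (j+1)
        = ∑ j ∈ Finset.range (s.card + 1 + 1),
            (∑ t ∈ s.powersetCard j, ∏ i ∈ t, f i) * y ^ j - 1 := by
      rw [Finset.sum_range_succ' (fun j => (∑ t ∈ s.powersetCard j, ∏ i ∈ t, f i) * y ^ j)
        (s.card + 1)]
      simp
    have h2 : ∑ j ∈ Finset.range (s.card + 1 + 1),
        (∑ t ∈ s.powersetCard j, ∏ i ∈ t, f i) * y ^ j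
        = ∑ j ∈ Finset.range (s.card + 1),
            (∑ t ∈ s.powersetCard j, ∏ i ∈ t, f i) * y ^ j := by
      rw [Finset.sum_range_succ, htop, zero_mul, add_zero]
    have h3 : ∑ j ∈ Finset.range (s.card + 1),
        f a * (∑ t ∈ s.powersetCard j, ∏ i ∈ t, f i) * y ^ (j+1)
        = f a * y * ∑ j ∈ Finset.range (s.card + 1),
            (∑ t ∈ s.powersetCard j, ∏ i ∈ t, f i) * y ^ j := by
      rw [Finset.mul_sum]
      exact Finset.sum_congr rfl fun j _ => by ring
    rw [h1, h2, h3]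
    ring

lemma C_mul_X_pow (N : ℕ) (a : MvPolynomial (Fin N) ℚ) (k : Fin 2) (j : ℕ) :
    MvPowerSeries.C (σ := Fin 2) (R := _) a * MvPowerSeries.X k ^ j
      = MvPowerSeries.monomial (Finsupp.single k j) a := by
  rw [MvPowerSeries.X_pow_eq,
    show MvPowerSeries.C (σ := Fin 2) (R := MvPolynomial (Fin N) ℚ) a
      = MvPowerSeries.monomial 0 a from rfl, MvPowerSeries.monomial_mul_monomial]
  simp

lemma Ev_sum (N : ℕ) :
    (∏ i : Fin N,
        (1 + MvPowerSeries.X 1 * MvPowerSeries.C (σ := Fin 2) (R := MvPolynomial (Fin N) ℚ) (X i)))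
      = ∑ j ∈ Finset.range (N + 1),
          MvPowerSeries.monomial (Finsupp.single (1 : Fin 2) j) (esymm (Fin N) ℚ j) := by
  have h := gen_vieta (Finset.univ : Finset (Fin N))
    (fun i => MvPowerSeries.C (σ := Fin 2) (R := MvPolynomial (Fin N) ℚ) (X i)) (MvPowerSeries.X 1)
  rw [Finset.card_univ, Fintype.card_fin] at h
  calc (∏ i : Fin N,
        (1 + MvPowerSeries.X 1 * MvPowerSeries.C (σ := Fin 2) (R := MvPolynomial (Fin N) ℚ) (X i)))
      = ∏ i : Fin N,
        (1 + MvPowerSeries.C (σ := Fin 2) (R := MvPolynomial (Fin N) ℚ) (X i) * MvPowerSeries.X 1) := by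
        refine Finset.prod_congr rfl fun i _ => by ring
    _ = ∑ j ∈ Finset.range (N + 1),
          MvPowerSeries.monomial (Finsupp.single (1 : Fin 2) j) (esymm (Fin N) ℚ j) := by
        rw [h]
        refine Finset.sum_congr rfl fun j _ => ?_
        rw [← C_mul_X_pow]
        congr 1
        rw [esymm, map_sum]
        exact Finset.sum_congr rfl fun t _ => by rw [map_prod]

lemma Du_sum (N : ℕ) :
    (∏ i : Fin N,
        (1 - MvPowerSeries.X 0 * MvPowerSeries.C (σ := Fin 2) (R := MvPolynomial (Fin N) ℚ) (X i)))
      = ∑ j ∈ Finset.range (N + 1),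
          MvPowerSeries.monomial (Finsupp.single (0 : Fin 2) j)
            ((-1) ^ j * esymm (Fin N) ℚ j) := by
  have h := gen_vieta (Finset.univ : Finset (Fin N))
    (fun i => -(MvPowerSeries.C (σ := Fin 2) (R := MvPolynomial (Fin N) ℚ) (X i))) (MvPowerSeries.X 0)
  rw [Finset.card_univ, Fintype.card_fin] at h
  calc (∏ i : Fin N,
        (1 - MvPowerSeries.X 0 * MvPowerSeries.C (σ := Fin 2) (R := MvPolynomial (Fin N) ℚ) (X i)))
      = ∏ i : Fin N,
        (1 + (-(MvPowerSeries.C (σ := Fin 2) (R := MvPolynomial (Fin N) ℚ) (X i))) * MvPowerSeries.X 0) := by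
        refine Finset.prod_congr rfl fun i _ => by ring
    _ = ∑ j ∈ Finset.range (N + 1),
          MvPowerSeries.monomial (Finsupp.single (0 : Fin 2) j)
            ((-1) ^ j * esymm (Fin N) ℚ j) := by
        rw [h]
        refine Finset.sum_congr rfl fun j _ => ?_
        rw [← C_mul_X_pow]
        congr 1
        rw [esymm, Finset.mul_sum, map_sum]
        refine Finset.sum_congr rfl fun t ht => ?_
        rw [map_mul, map_pow, map_neg, map_one, map_prod]
        calc ∏ i ∈ t, -(MvPowerSeries.C (σ := Fin 2) (R := MvPolynomial (Fin N) ℚ)) (X i)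
            = ∏ i ∈ t, ((-1) * (MvPowerSeries.C (σ := Fin 2) (R := MvPolynomial (Fin N) ℚ)) (X i)) := by
              exact Finset.prod_congr rfl fun i _ => by ring
          _ = (-1) ^ t.card * ∏ i ∈ t, (MvPowerSeries.C (σ := Fin 2) (R := MvPolynomial (Fin N) ℚ)) (X i) := by
              rw [Finset.prod_mul_distrib, Finset.prod_const]
          _ = (-1) ^ j * ∏ i ∈ t, (MvPowerSeries.C (σ := Fin 2) (R := MvPolynomial (Fin N) ℚ)) (X i) := by
              rw [(Finset.mem_powersetCard.1 ht).2]

lemma esymm_big (N j : ℕ) (h : N < j) : esymm (Fin N) ℚ j = 0 := by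
  rw [esymm, Finset.powersetCard_eq_empty.2 (by simp [h]), Finset.sum_empty]

lemma coeff_Hu_single (N m : ℕ) :
    MvPowerSeries.coeff (Finsupp.single (0 : Fin 2) m) (Hu N) = hsymm (Fin N) ℚ m := by
  rw [coeff_Hu, Finsupp.single_eq_of_ne (by decide : (1:Fin 2) ≠ 0), if_pos rfl,
    Finsupp.single_eq_same]

lemma newton (N n : ℕ) :
    ∑ j ∈ Finset.range (n + 1), (-1 : MvPolynomial (Fin N) ℚ) ^ j
        * esymm (Fin N) ℚ j * hsymm (Fin N) ℚ (n - j)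
      = if n = 0 then 1 else 0 := by
  have h := congrArg (MvPowerSeries.coeff (Finsupp.single (0 : Fin 2) n)) (Du_mul_Hu N)
  rw [Du_sum, Finset.sum_mul, map_sum, MvPowerSeries.coeff_one] at h
  have hterm : ∀ j : ℕ,
      MvPowerSeries.coeff (Finsupp.single (0 : Fin 2) n)
        (MvPowerSeries.monomial (Finsupp.single (0 : Fin 2) j)
          ((-1) ^ j * esymm (Fin N) ℚ j) * Hu N)
      = if j ≤ n then (-1) ^ j * esymm (Fin N) ℚ j * hsymm (Fin N) ℚ (n - j) else 0 := by
    intro j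
    rw [MvPowerSeries.coeff_monomial_mul]
    by_cases hj : j ≤ n
    · rw [if_pos (by rw [Finsupp.single_le_iff, Finsupp.single_eq_same]; exact hj), if_pos hj,
        ← Finsupp.single_tsub, coeff_Hu_single, mul_assoc]
    · rw [if_neg (by rw [Finsupp.single_le_iff, Finsupp.single_eq_same]; exact hj), if_neg hj]
  simp only [hterm, Finsupp.single_eq_zero] at h
  have b2 : ∑ j ∈ Finset.range (n + 1),
      (if j ≤ n then (-1 : MvPolynomial (Fin N) ℚ) ^ j
        * esymm (Fin N) ℚ j * hsymm (Fin N) ℚ (n - j) else 0)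
      = ∑ j ∈ Finset.range (N + n + 2),
      (if j ≤ n then (-1 : MvPolynomial (Fin N) ℚ) ^ j
        * esymm (Fin N) ℚ j * hsymm (Fin N) ℚ (n - j) else 0) := by
    refine Finset.sum_subset (Finset.range_subset_range.2 (by omega)) fun j hj hj' => ?_
    rw [Finset.mem_range] at hj'
    rw [if_neg (by omega)]
  have b3 : ∑ j ∈ Finset.range (N + 1),
      (if j ≤ n then (-1 : MvPolynomial (Fin N) ℚ) ^ j
        * esymm (Fin N) ℚ j * hsymm (Fin N) ℚ (n - j) else 0)
      = ∑ j ∈ Finset.range (N + n + 2),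
      (if j ≤ n then (-1 : MvPolynomial (Fin N) ℚ) ^ j
        * esymm (Fin N) ℚ j * hsymm (Fin N) ℚ (n - j) else 0) := by
    refine Finset.sum_subset (Finset.range_subset_range.2 (by omega)) fun j hj hj' => ?_
    rw [Finset.mem_range] at hj'
    by_cases hjn : j ≤ n
    · rw [if_pos hjn, esymm_big N j (by omega), mul_zero, zero_mul]
    · rw [if_neg hjn]
  have b1 : ∑ j ∈ Finset.range (n + 1), (-1 : MvPolynomial (Fin N) ℚ) ^ j
        * esymm (Fin N) ℚ j * hsymm (Fin N) ℚ (n - j)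
      = ∑ j ∈ Finset.range (n + 1),
      (if j ≤ n then (-1 : MvPolynomial (Fin N) ℚ) ^ j
        * esymm (Fin N) ℚ j * hsymm (Fin N) ℚ (n - j) else 0) := by
    refine Finset.sum_congr rfl fun j hj => ?_
    rw [Finset.mem_range] at hj
    rw [if_pos (by omega)]
  rw [b1, b2, ← b3, h]

lemma newton' (N n : ℕ) :
    ∑ j ∈ Finset.range (n + 1), (-1 : MvPolynomial (Fin N) ℚ) ^ j
        * hsymm (Fin N) ℚ j * esymm (Fin N) ℚ (n - j)
      = if n = 0 then 1 else 0 := by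
  have hsq : ∀ m : ℕ, ((-1 : MvPolynomial (Fin N) ℚ) ^ m) * ((-1) ^ m) = 1 := by
    intro m
    rw [← pow_add, ← two_mul, pow_mul, neg_one_sq, one_pow]
  have hrefl := Finset.sum_range_reflect
    (fun j => (-1 : MvPolynomial (Fin N) ℚ) ^ j * esymm (Fin N) ℚ j * hsymm (Fin N) ℚ (n - j))
    (n + 1)
  rw [newton N n] at hrefl
  calc ∑ j ∈ Finset.range (n + 1), (-1 : MvPolynomial (Fin N) ℚ) ^ j
        * hsymm (Fin N) ℚ j * esymm (Fin N) ℚ (n - j)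
      = ∑ j ∈ Finset.range (n + 1), (-1 : MvPolynomial (Fin N) ℚ) ^ n *
          ((-1) ^ (n + 1 - 1 - j) * esymm (Fin N) ℚ (n + 1 - 1 - j)
            * hsymm (Fin N) ℚ (n - (n + 1 - 1 - j))) := by
        refine Finset.sum_congr rfl fun j hj => ?_
        rw [Finset.mem_range] at hj
        have hj' : j ≤ n := by omega
        have h1 : n + 1 - 1 - j = n - j := by omega
        have h2 : n - (n - j) = j := by omega
        rw [h1, h2]
        have hsign : (-1 : MvPolynomial (Fin N) ℚ) ^ n * (-1) ^ (n - j) = (-1) ^ j := by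
          have hd : (-1 : MvPolynomial (Fin N) ℚ) ^ (n - j) * (-1) ^ j = (-1) ^ n := by
            rw [← pow_add, Nat.sub_add_cancel hj']
          rw [← hd]
          linear_combination ((-1 : MvPolynomial (Fin N) ℚ)) ^ j * hsq (n - j)
        calc (-1 : MvPolynomial (Fin N) ℚ) ^ j * hsymm (Fin N) ℚ j * esymm (Fin N) ℚ (n - j)
            = ((-1 : MvPolynomial (Fin N) ℚ) ^ j) * (esymm (Fin N) ℚ (n - j) * hsymm (Fin N) ℚ j)
              := by ring
          _ = ((-1 : MvPolynomial (Fin N) ℚ) ^ n * (-1) ^ (n - j))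
              * (esymm (Fin N) ℚ (n - j) * hsymm (Fin N) ℚ j) := by rw [hsign]
          _ = _ := by ring
    _ = (-1 : MvPolynomial (Fin N) ℚ) ^ n *
        ∑ j ∈ Finset.range (n + 1), ((-1) ^ (n + 1 - 1 - j) * esymm (Fin N) ℚ (n + 1 - 1 - j)
            * hsymm (Fin N) ℚ (n - (n + 1 - 1 - j))) := by rw [Finset.mul_sum]
    _ = (-1 : MvPolynomial (Fin N) ℚ) ^ n * (if n = 0 then 1 else 0) := by
        rw [hrefl]
    _ = if n = 0 then 1 else 0 := by
        by_cases hn : n = 0 <;> simp [hn]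

lemma hook_id (N a b : ℕ) :
    esymm (Fin N) ℚ b * hsymm (Fin N) ℚ a
      = (if a = 0 ∧ b = 0 then 1 else 0)
        + ((if 1 ≤ a then hookSchur N (a-1) b else 0)
          + (if 1 ≤ b then hookSchur N a (b-1) else 0)) := by
  match a, b with
  | 0, 0 => simp [esymm_zero, hsymm_zero]
  | (k+1), 0 =>
    simp only [if_neg (by omega : ¬((k+1) = 0 ∧ (0:ℕ) = 0)), if_pos (by omega : 1 ≤ k+1),
      if_neg (by omega : ¬ (1:ℕ) ≤ 0), add_zero, zero_add, Nat.add_sub_cancel]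
    rw [hookSchur, Finset.sum_range_one]
    simp [esymm_zero, hsymm_zero]
  | 0, (m+1) =>
    rw [if_neg (show ¬((0:ℕ) = 0 ∧ m+1 = 0) from by omega), if_pos (show 1 ≤ m+1 from by omega),
      if_neg (show ¬ (1:ℕ) ≤ 0 from by omega)]
    simp only [zero_add, Nat.add_sub_cancel]
    rw [hsymm_zero, mul_one, hookSchur]
    have h := newton' N (m+1)
    rw [if_neg (by omega), Finset.sum_range_succ'
      (fun j => (-1 : MvPolynomial (Fin N) ℚ) ^ j * hsymm (Fin N) ℚ j
        * esymm (Fin N) ℚ (m + 1 - j)) (m+1)] at h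
    simp only [pow_zero, hsymm_zero, one_mul, Nat.sub_zero] at h
    have h2 : ∑ j ∈ Finset.range (m + 1),
        (-1 : MvPolynomial (Fin N) ℚ) ^ (j+1) * hsymm (Fin N) ℚ (j+1)
          * esymm (Fin N) ℚ (m + 1 - (j+1))
        = - ∑ j ∈ Finset.range (m + 1),
          (-1 : MvPolynomial (Fin N) ℚ) ^ j * hsymm (Fin N) ℚ (0 + 1 + j)
            * esymm (Fin N) ℚ (m - j) := by
      rw [← Finset.sum_neg_distrib]
      refine Finset.sum_congr rfl fun j hj => ?_
      rw [show m + 1 - (j+1) = m - j from by omega, show (0 + 1 + j) = j + 1 from by omega,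
        pow_succ]
      ring
    rw [h2] at h
    linear_combination h
  | (k+1), (m+1) =>
    simp only [if_neg (by omega : ¬(k+1 = 0 ∧ m+1 = 0)), if_pos (by omega : 1 ≤ k+1),
      if_pos (by omega : 1 ≤ m+1), zero_add, Nat.add_sub_cancel]
    rw [hookSchur, hookSchur, Finset.sum_range_succ'
      (fun j => (-1 : MvPolynomial (Fin N) ℚ) ^ j * hsymm (Fin N) ℚ (k + 1 + j)
        * esymm (Fin N) ℚ (m + 1 - j)) (m+1)]
    simp only [pow_zero, one_mul, Nat.add_zero, Nat.sub_zero]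
    rw [add_comm (∑ j ∈ Finset.range (m+1), _) _, add_assoc, ← Finset.sum_add_distrib]
    have hz : ∑ j ∈ Finset.range (m+1),
        ((-1 : MvPolynomial (Fin N) ℚ) ^ (j+1) * hsymm (Fin N) ℚ (k + 1 + (j+1))
            * esymm (Fin N) ℚ (m + 1 - (j+1))
          + (-1 : MvPolynomial (Fin N) ℚ) ^ j * hsymm (Fin N) ℚ (k + 1 + 1 + j)
            * esymm (Fin N) ℚ (m - j)) = 0 := by
      rw [← Finset.sum_const_zero (s := Finset.range (m+1))]
      refine Finset.sum_congr rfl fun j hj => ?_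
      rw [show m + 1 - (j+1) = m - j from by omega, show k + 1 + (j+1) = k + 1 + 1 + j from by
        omega, pow_succ]
      ring
    rw [hz, add_zero]
    ring

lemma key2 (N : ℕ) :
    (∏ i : Fin N,
        (1 + MvPowerSeries.X 1 * MvPowerSeries.C (σ := Fin 2) (R := MvPolynomial (Fin N) ℚ) (X i)))
      * Hu N
      = 1 + (MvPowerSeries.X 0 + MvPowerSeries.X 1) * hookSchurSeries N := by
  apply MvPowerSeries.ext
  intro d
  have hterm : ∀ j : ℕ,
      MvPowerSeries.coeff d
        (MvPowerSeries.monomial (Finsupp.single (1 : Fin 2) j) (esymm (Fin N) ℚ j) * Hu N)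
      = if j = d 1 then esymm (Fin N) ℚ (d 1) * hsymm (Fin N) ℚ (d 0) else 0 := by
    intro j
    rw [MvPowerSeries.coeff_monomial_mul, coeff_Hu]
    have e1 : (d - Finsupp.single (1 : Fin 2) j) 1 = d 1 - j := by
      rw [Finsupp.tsub_apply, Finsupp.single_eq_same]
    have e0 : (d - Finsupp.single (1 : Fin 2) j) 0 = d 0 := by
      rw [Finsupp.tsub_apply, Finsupp.single_eq_of_ne (by decide : (0:Fin 2) ≠ 1)]
      omega
    rw [e1, e0]
    by_cases hj : j = d 1
    · rw [if_pos hj, if_pos (by rw [Finsupp.single_le_iff]; omega), if_pos (by omega), hj]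
    · by_cases hle : j ≤ d 1
      · rw [if_pos (by rw [Finsupp.single_le_iff]; omega), if_neg hj, if_neg (by omega), mul_zero]
      · rw [if_neg (by rw [Finsupp.single_le_iff]; omega), if_neg hj]
  have hL : MvPowerSeries.coeff d
      ((∏ i : Fin N,
        (1 + MvPowerSeries.X 1 * MvPowerSeries.C (σ := Fin 2) (R := MvPolynomial (Fin N) ℚ) (X i)))
        * Hu N) = esymm (Fin N) ℚ (d 1) * hsymm (Fin N) ℚ (d 0) := by
    rw [Ev_sum, Finset.sum_mul, map_sum]
    simp only [hterm]
    rw [Finset.sum_ite_eq' (Finset.range (N+1)) (d 1)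
      (fun _ => esymm (Fin N) ℚ (d 1) * hsymm (Fin N) ℚ (d 0))]
    by_cases hb : d 1 ∈ Finset.range (N+1)
    · rw [if_pos hb]
    · rw [if_neg hb, esymm_big N (d 1) (by rw [Finset.mem_range] at hb; omega), zero_mul]
  rw [hL]
  have hS : ∀ e : Fin 2 →₀ ℕ,
      MvPowerSeries.coeff e (hookSchurSeries N) = hookSchur N (e 0) (e 1) := fun e => rfl
  rw [map_add, add_mul, map_add, MvPowerSeries.coeff_one, MvPowerSeries.X,
    MvPowerSeries.coeff_monomial_mul, MvPowerSeries.X, MvPowerSeries.coeff_monomial_mul]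
  have hd0 : ((d = 0)) ↔ (d 0 = 0 ∧ d 1 = 0) := by
    constructor
    · rintro rfl; simp
    · rintro ⟨h0, h1⟩; exact fin2_ext d 0 (by simpa using h0) (by simpa using h1)
  have c0 : (Finsupp.single (0 : Fin 2) 1 ≤ d) ↔ 1 ≤ d 0 := by
    rw [Finsupp.single_le_iff]
  have c1 : (Finsupp.single (1 : Fin 2) 1 ≤ d) ↔ 1 ≤ d 1 := by
    rw [Finsupp.single_le_iff]
  have s0 : MvPowerSeries.coeff (d - Finsupp.single (0 : Fin 2) 1) (hookSchurSeries N)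
      = hookSchur N (d 0 - 1) (d 1) := by
    rw [hS]
    congr 1
    · rw [Finsupp.tsub_apply, Finsupp.single_eq_same]
    · rw [Finsupp.tsub_apply, Finsupp.single_eq_of_ne (by decide : (1:Fin 2) ≠ 0)]; omega
  have s1 : MvPowerSeries.coeff (d - Finsupp.single (1 : Fin 2) 1) (hookSchurSeries N)
      = hookSchur N (d 0) (d 1 - 1) := by
    rw [hS]
    congr 1
    · rw [Finsupp.tsub_apply, Finsupp.single_eq_of_ne (by decide : (0:Fin 2) ≠ 1)]; omega
    · rw [Finsupp.tsub_apply, Finsupp.single_eq_same]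
  rw [s0, s1]
  have hid := hook_id N (d 0) (d 1)
  rw [hid]
  congr 1
  · simp only [hd0]
  · congr 1
    · by_cases h : 1 ≤ d 0
      · rw [if_pos h, if_pos (c0.2 h), one_mul]
      · rw [if_neg h, if_neg (fun hh => h (c0.1 hh))]
    · by_cases h : 1 ≤ d 1
      · rw [if_pos h, if_pos (c1.2 h), one_mul]
      · rw [if_neg h, if_neg (fun hh => h (c1.1 hh))]

/-- the hook Schur generating identity
`∏_i (1+v x_i)/(1-u x_i) = 1 + (u+v) Σ_{a,b≥0} s_{(a|b)}(x) u^a v^b`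
as formal power series in `u = X 0`, `v = X 1` over symmetric polynomials. -/
theorem hook_schur_generating (N : ℕ) :
    (∏ i : Fin N,
        ((1 + MvPowerSeries.X 1 * MvPowerSeries.C (σ := Fin 2) (R := MvPolynomial (Fin N) ℚ) (X i)) *
          MvPowerSeries.invOfUnit
            (1 - MvPowerSeries.X 0 * MvPowerSeries.C (σ := Fin 2) (R := MvPolynomial (Fin N) ℚ) (X i)) 1)) =
      1 + (MvPowerSeries.X 0 + MvPowerSeries.X 1) * hookSchurSeries N := by
  have hc : ∀ i : Fin N,
      MvPowerSeries.constantCoeff (σ := Fin 2) (R := MvPolynomial (Fin N) ℚ)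
        (1 - MvPowerSeries.X 0 * MvPowerSeries.C (σ := Fin 2) (R := MvPolynomial (Fin N) ℚ) (X i))
      = ((1 : (MvPolynomial (Fin N) ℚ)ˣ) : MvPolynomial (Fin N) ℚ) := by
    intro i
    rw [map_sub, map_one, map_mul, MvPowerSeries.constantCoeff_X, zero_mul, sub_zero,
      Units.val_one]
  have hBD : (∏ i : Fin N,
      MvPowerSeries.invOfUnit
        (1 - MvPowerSeries.X 0 * MvPowerSeries.C (σ := Fin 2) (R := MvPolynomial (Fin N) ℚ) (X i)) 1)
      * (∏ i : Fin N,
        (1 - MvPowerSeries.X 0 * MvPowerSeries.C (σ := Fin 2) (R := MvPolynomial (Fin N) ℚ) (X i))) = 1 := by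
    rw [← Finset.prod_mul_distrib]
    rw [Finset.prod_congr rfl (fun i _ => MvPowerSeries.invOfUnit_mul _ _ (hc i))]
    exact Finset.prod_const_one
  have hB : (∏ i : Fin N,
      MvPowerSeries.invOfUnit
        (1 - MvPowerSeries.X 0 * MvPowerSeries.C (σ := Fin 2) (R := MvPolynomial (Fin N) ℚ) (X i)) 1)
      = Hu N := by
    calc (∏ i : Fin N,
        MvPowerSeries.invOfUnit
          (1 - MvPowerSeries.X 0 * MvPowerSeries.C (σ := Fin 2) (R := MvPolynomial (Fin N) ℚ) (X i)) 1)
        = (∏ i : Fin N,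
            MvPowerSeries.invOfUnit
              (1 - MvPowerSeries.X 0 * MvPowerSeries.C (σ := Fin 2) (R := MvPolynomial (Fin N) ℚ) (X i)) 1)
          * ((∏ i : Fin N,
              (1 - MvPowerSeries.X 0 * MvPowerSeries.C (σ := Fin 2) (R := MvPolynomial (Fin N) ℚ) (X i)))
            * Hu N) := by rw [Du_mul_Hu, mul_one]
      _ = ((∏ i : Fin N,
            MvPowerSeries.invOfUnit
              (1 - MvPowerSeries.X 0 * MvPowerSeries.C (σ := Fin 2) (R := MvPolynomial (Fin N) ℚ) (X i)) 1)
          * (∏ i : Fin N,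
              (1 - MvPowerSeries.X 0 * MvPowerSeries.C (σ := Fin 2) (R := MvPolynomial (Fin N) ℚ) (X i))))
          * Hu N := by ring
      _ = Hu N := by rw [hBD, one_mul]
  rw [Finset.prod_mul_distrib, hB, key2]
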